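/- arXiv:2010.09091 — 2 statements merged into one kernel-verified Lean document; each statement's English description precedes it below -/
import Mathlib

section
/- For all integers k ≥ 4 and all integers m, n ≥ 0 with m+2n ≥ 3, there exists an (m,n)-coloured mixed graph H on exactly t = k²·(m+2n)^{k+1} vertices that has Property P_{i, (k-i)(k-1)+1} for every i = 1, 2, …, k. -/
/-- The possible "adjacency types" between an ordered pair of adjacent vertices in an
`(m,n)`-coloured mixed graph: an edge of one of `m` colours, an arc (of one of `n` colours)
from the first vertex to the second, or an arc from the second vertex to the first. -/
inductive AdjType (m n : ℕ) : Type where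
  | edge : Fin m → AdjType m n
  | fwd  : Fin n → AdjType m n
  | bwd  : Fin n → AdjType m n
  deriving DecidableEq

/-- Reversing the roles of the two vertices flips an adjacency type. -/
def AdjType.flip {m n : ℕ} : AdjType m n → AdjType m n
  | .edge i => .edge i
  | .fwd j => .bwd j
  | .bwd j => .fwd j

theorem AdjType.flip_flip {m n : ℕ} (t : AdjType m n) : t.flip.flip = t := by
  cases t <;> rfl

/-- An `(m,n)`-coloured mixed graph on vertex type `V`: any two distinct vertices are joined by
at most one edge (with one of `m` colours) or one arc (with one of `n` colours and a direction),
recorded by `typ x y`, the adjacency type of the ordered pair `(x, y)`. -/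
structure MixedGraph (V : Type) (m n : ℕ) : Type where
  typ : V → V → Option (AdjType m n)
  typ_irrefl : ∀ v, typ v v = none
  typ_flip : ∀ u v, typ u v = (typ v u).map AdjType.flip

namespace MixedGraph

variable {V W : Type} {m n : ℕ}

/-- Adjacency in (the underlying undirected graph of) a mixed graph. -/
def Adj (G : MixedGraph V m n) (u v : V) : Prop := (G.typ u v).isSome

/-- The degree of a vertex in the underlying undirected graph. -/
noncomputable def degree [Fintype V] (G : MixedGraph V m n) (v : V) : ℕ :=
  {u | G.Adj v u}.ncard

/-- The maximum degree of the underlying undirected graph. -/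
noncomputable def maxDegree [Fintype V] (G : MixedGraph V m n) : ℕ :=
  Finset.univ.sup G.degree

/-- The underlying (simple, undirected) graph of a mixed graph. -/
def toSimpleGraph (G : MixedGraph V m n) : SimpleGraph V where
  Adj u v := G.Adj u v
  symm := by
    constructor
    intro u v h
    unfold MixedGraph.Adj at *
    rw [G.typ_flip] at h
    simpa using h
  loopless := by
    constructor
    intro v h
    unfold MixedGraph.Adj at h
    rw [G.typ_irrefl] at h
    simp at h

/-- Property `P_{a,b}`: for every set `X` of at most `a` pairwise adjacent vertices and every
assignment `L` of adjacency types to the vertices of `X`, at least `b` vertices `x` satisfy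
`typ x v = L v` for all `v ∈ X`. -/
def HasPropP [Fintype V] (G : MixedGraph V m n) (a b : ℕ) : Prop :=
  ∀ X : Finset V, X.card ≤ a →
    (∀ u ∈ X, ∀ v ∈ X, u ≠ v → G.Adj u v) →
    ∀ L : {v : V // v ∈ X} → AdjType m n,
      b ≤ {x : V | ∀ v : {v : V // v ∈ X}, G.typ x v = some (L v)}.ncard

end MixedGraph

/-- A homomorphism of `(m,n)`-coloured mixed graphs: it preserves edges together with their
colours, and arcs together with their colours and orientations. -/
def IsMixedHom {V W : Type} {m n : ℕ} (G : MixedGraph V m n) (H : MixedGraph W m n)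
    (f : V → W) : Prop :=
  ∀ u v (t : AdjType m n), G.typ u v = some t → H.typ (f u) (f v) = some t

/-- `H` is `k`-hom-universal if every finite `(m,n)`-coloured mixed graph of maximum degree
at most `k` admits a homomorphism to `H`. -/
def KHomUniversal {W : Type} {m n : ℕ} (H : MixedGraph W m n) (k : ℕ) : Prop :=
  ∀ (V : Type) (_ : Fintype V) (G : MixedGraph V m n),
    (∀ v, G.degree v ≤ k) → ∃ f : V → W, IsMixedHom G H f

/-- The `(m,n)`-coloured mixed chromatic number: the least `k` such that `G` has a homomorphism
to some `(m,n)`-coloured mixed graph on `k` vertices. -/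
noncomputable def mixedChromNum {V : Type} {m n : ℕ} (G : MixedGraph V m n) : ℕ :=
  sInf {k : ℕ | ∃ H : MixedGraph (Fin k) m n, ∃ f : V → Fin k, IsMixedHom G H f}

/-- A Latin square, encoding a 1-factorization of `K_{c,c}`: `F s t` is the index of the
1-factor containing the edge joining `a_s ∈ A` and `b_t ∈ B`. -/
def IsLatin {c : ℕ} (F : Fin c → Fin c → Fin c) : Prop :=
  (∀ s, Function.Bijective (F s)) ∧ (∀ t, Function.Bijective fun s => F s t)

/-- The adjacency type assigned to the `k`-th `1`-factor (from `A` to `B`): an edge of colour `k`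
if `k < m`, an arc of colour `k - m` from `A` to `B` if `m ≤ k < m + n`, and an arc of colour
`k - (m+n)` from `B` to `A` otherwise. -/
def factorType (m n : ℕ) (k : Fin (m + 2*n)) : AdjType m n :=
  if h : (k : ℕ) < m then .edge ⟨k, h⟩
  else if h' : (k : ℕ) < m + n then .fwd ⟨(k : ℕ) - m, by omega⟩
  else .bwd ⟨(k : ℕ) - (m + n), by have := k.isLt; omega⟩

/-- The member of the family `H_{c,c}` (where `c = m + 2n`) determined by the 1-factorization
`F` of `K_{c,c}`: vertex set `A ⊕ B`, with `a_s` and `b_t` joined according to the 1-factor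
containing the edge `a_s b_t`. -/
def Hgraph (m n : ℕ) (F : Fin (m+2*n) → Fin (m+2*n) → Fin (m+2*n)) :
    MixedGraph (Fin (m+2*n) ⊕ Fin (m+2*n)) m n where
  typ x y :=
    match x, y with
    | Sum.inl s, Sum.inr t => some (factorType m n (F s t))
    | Sum.inr t, Sum.inl s => some (AdjType.flip (factorType m n (F s t)))
    | _, _ => none
  typ_irrefl v := by cases v <;> rfl
  typ_flip u v := by
    cases u <;> cases v <;> simp [AdjType.flip_flip]

/-- Vertices of members of the family `Z_{m,n,q}` (with `c = m + 2n`): pairs consisting of an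
index `i` and a tuple of values in `{1, …, c}` indexed by the coordinates other than `i`. -/
abbrev ZVert (q c : ℕ) : Type := Σ i : Fin q, ({j : Fin q // j ≠ i} → Fin c)

/-- The member of the family `Z_{m,n,q}` determined by the member of `H_{c,c}` encoded by the
1-factorization `F`: vertices `v` (index `i`) and `w` (index `j`) with `i < j` are joined the
way `a_s` and `b_t` are joined in `H`, where `s = v_j` and `t = w_i`; vertices with equal
index are nonadjacent. -/
def Zgraph (m n q : ℕ) (F : Fin (m+2*n) → Fin (m+2*n) → Fin (m+2*n)) :
    MixedGraph (ZVert q (m+2*n)) m n where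
  typ v w :=
    if h : v.1 < w.1 then
      some (factorType m n
        (F (v.2 ⟨w.1, Ne.symm (ne_of_lt h)⟩) (w.2 ⟨v.1, ne_of_lt h⟩)))
    else if h' : w.1 < v.1 then
      some (AdjType.flip (factorType m n
        (F (w.2 ⟨v.1, Ne.symm (ne_of_lt h')⟩) (v.2 ⟨w.1, ne_of_lt h'⟩))))
    else none
  typ_irrefl v := by simp
  typ_flip u v := by
    try dsimp only
    rcases lt_trichotomy u.1 v.1 with h | h | h
    · rw [dif_pos h, dif_neg (asymm h), dif_pos h]
      simp [AdjType.flip_flip]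
    · simp [h, lt_irrefl]
    · rw [dif_neg (asymm h), dif_pos h, dif_pos h]
      simp


/- ===== Auxiliary construction for stmt3 ===== -/

/-- Inverse of `factorType`. -/
def invFactor (m n : ℕ) : AdjType m n → Fin (m + 2*n)
  | .edge i => ⟨i, by have := i.isLt; omega⟩
  | .fwd j => ⟨m + j, by have := j.isLt; omega⟩
  | .bwd j => ⟨m + n + j, by have := j.isLt; omega⟩

lemma factor_invFactor (m n : ℕ) (t : AdjType m n) :
    factorType m n (invFactor m n t) = t := by
  cases t with
  | edge i =>
      have hi := i.isLt
      simp only [invFactor, factorType]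
      simp [hi]
  | fwd j =>
      have hj := j.isLt
      simp only [invFactor, factorType]
      have e1 : ¬ (m + (j : ℕ) < m) := by omega
      have e2 : m + (j : ℕ) < m + n := by omega
      simp only [e1, e2, ↓reduceDIte]
      have h : m + (j : ℕ) - m = j := by omega
      simp [h]
  | bwd j =>
      have hj := j.isLt
      simp only [invFactor, factorType]
      have e1 : ¬ (m + n + (j : ℕ) < m) := by omega
      have e2 : ¬ (m + n + (j : ℕ) < m + n) := by omega
      simp only [e1, e2, ↓reduceDIte]
      have h : m + n + (j : ℕ) - (m + n) = j := by omega
      simp [h]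

/-- The concrete graph used for stmt3: vertices are pairs `(a, f)` with
`a : Fin (k^2)` and `f : Fin (k+1) → Fin (m+2n)`.  The "index" of a vertex is
`a % (k+2)`; vertices with equal index are nonadjacent, and otherwise joined
according to the sum of appropriate coordinates. -/
def Gg (m n k : ℕ) : MixedGraph (Fin (k^2) × (Fin (k+1) → Fin (m+2*n))) m n where
  typ x y :=
    if h : x.1.val % (k+2) < y.1.val % (k+2) then
      some (factorType m n (x.2 ⟨y.1.val % (k+2) - 1, by
          have := Nat.mod_lt y.1.val (show 0 < k+2 by omega); omega⟩
        + y.2 ⟨x.1.val % (k+2), by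
          have := Nat.mod_lt y.1.val (show 0 < k+2 by omega); omega⟩))
    else if h' : y.1.val % (k+2) < x.1.val % (k+2) then
      some (AdjType.flip (factorType m n (y.2 ⟨x.1.val % (k+2) - 1, by
          have := Nat.mod_lt x.1.val (show 0 < k+2 by omega); omega⟩
        + x.2 ⟨y.1.val % (k+2), by
          have := Nat.mod_lt x.1.val (show 0 < k+2 by omega); omega⟩)))
    else none
  typ_irrefl v := by simp
  typ_flip u v := by
    try dsimp only
    rcases lt_trichotomy (u.1.val % (k+2)) (v.1.val % (k+2)) with h | h | h
    · rw [dif_pos h, dif_neg (by omega), dif_pos h]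
      simp [AdjType.flip_flip]
    · simp [h, lt_irrefl]
    · rw [dif_neg (by omega), dif_pos h, dif_pos h]
      simp

/-- The value function for the witness construction. -/
def wval (m n k : ℕ) [NeZero (m+2*n)]
    (X : Finset (Fin (k^2) × (Fin (k+1) → Fin (m+2*n))))
    (L : {v // v ∈ X} → AdjType m n) (r : ℕ) (v : {v // v ∈ X}) : Fin (m+2*n) :=
  if r < v.1.1.val % (k+2) then
    invFactor m n (L v) - v.1.2 ⟨min r k, by omega⟩
  else
    invFactor m n ((L v).flip) - v.1.2 ⟨min (r-1) k, by omega⟩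

/-- The coordinate function of a witness with index `r`. -/
noncomputable def wfun (m n k : ℕ) [NeZero (m+2*n)]
    (X : Finset (Fin (k^2) × (Fin (k+1) → Fin (m+2*n))))
    (L : {v // v ∈ X} → AdjType m n) (r : ℕ) (p : Fin (k+1)) : Fin (m+2*n) :=
  ∑ v ∈ X.attach,
    if v.1.1.val % (k+2) = (if p.val < r then p.val else p.val + 1)
    then wval m n k X L r v else 0

lemma Gg_hasPropP (m n k i : ℕ) (hk : 4 ≤ k) (hc : 3 ≤ m + 2*n) (hik : i ≤ k) :
    (Gg m n k).HasPropP i ((k - i)*(k - 1) + 1) := by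
  classical
  haveI : NeZero (m + 2*n) := ⟨by omega⟩
  intro X hX hcl L
  -- residues are injective on cliques
  have hInj : ∀ u ∈ X, ∀ v ∈ X, u.1.val % (k+2) = v.1.val % (k+2) → u = v := by
    intro u hu v hv h
    by_contra hne
    have hadj := hcl u hu v hv hne
    simp only [MixedGraph.Adj, Gg, h, lt_irrefl, dif_neg, not_lt, le_refl] at hadj
    simp at hadj
  set R : Finset ℕ := X.image (fun v => v.1.val % (k+2)) with hR
  have hRcard : R.card ≤ i := le_trans Finset.card_image_le hX
  set A : Finset (Fin (k^2)) := Finset.univ.filter (fun a => ¬ (a.val % (k+2) ∈ R)) with hA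
  -- counting
  have hcount : ∀ r : ℕ,
      (Finset.univ.filter (fun a : Fin (k^2) => a.val % (k+2) = r)).card ≤ k - 1 := by
    intro r
    have h1 : (Finset.univ.filter (fun a : Fin (k^2) => a.val % (k+2) = r)).card
        ≤ (Finset.range (k-1)).card := by
      apply Finset.card_le_card_of_injOn (fun a => a.val / (k+2))
      · intro a ha
        simp only [Finset.coe_range, Set.mem_Iio]
        have hlt : a.val < k^2 := a.isLt
        have hk2 : k^2 ≤ (k-1) * (k+2) := by
          obtain ⟨d, rfl⟩ := Nat.exists_eq_add_of_le hk
          have h5 : 4 + d - 1 = 3 + d := by omega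
          rw [h5]
          nlinarith
        rw [Nat.div_lt_iff_lt_mul (show 0 < k+2 by omega)]
        omega
      · intro a ha b hb hab
        have ha2 : a.val % (k+2) = r := by
          have h := Finset.mem_coe.1 ha
          simp only [Finset.mem_filter] at h
          exact h.2
        have hb2 : b.val % (k+2) = r := by
          have h := Finset.mem_coe.1 hb
          simp only [Finset.mem_filter] at h
          exact h.2
        have hab2 : a.val / (k+2) = b.val / (k+2) := hab
        apply Fin.ext
        rw [← Nat.div_add_mod a.val (k+2), ← Nat.div_add_mod b.val (k+2), ha2, hb2, hab2]
    simpa using h1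
  have hB : (Finset.univ.filter (fun a : Fin (k^2) => a.val % (k+2) ∈ R)).card ≤ i * (k-1) := by
    calc (Finset.univ.filter (fun a : Fin (k^2) => a.val % (k+2) ∈ R)).card
        ≤ (R.biUnion (fun r => Finset.univ.filter
            (fun a : Fin (k^2) => a.val % (k+2) = r))).card := by
          apply Finset.card_le_card
          intro a ha
          simp only [Finset.mem_filter, Finset.mem_univ, true_and] at ha
          simp only [Finset.mem_biUnion, Finset.mem_filter, Finset.mem_univ, true_and]
          exact ⟨a.val % (k+2), ha, rfl⟩
      _ ≤ ∑ r ∈ R, (Finset.univ.filter (fun a : Fin (k^2) => a.val % (k+2) = r)).card :=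
          Finset.card_biUnion_le
      _ ≤ ∑ _r ∈ R, (k-1) := Finset.sum_le_sum (fun r _ => hcount r)
      _ = R.card * (k-1) := by rw [Finset.sum_const, smul_eq_mul]
      _ ≤ i * (k-1) := Nat.mul_le_mul_right _ hRcard
  have hAcard : (k - i)*(k-1) + 1 ≤ A.card := by
    have huniv : (Finset.univ : Finset (Fin (k^2))).card = k^2 := by simp
    have hsplit : (Finset.univ.filter (fun a : Fin (k^2) => a.val % (k+2) ∈ R)).card
        + A.card = (Finset.univ : Finset (Fin (k^2))).card := by
      rw [hA]
      exact Finset.card_filter_add_card_filter_not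
        (p := fun a : Fin (k^2) => a.val % (k+2) ∈ R)
    have hmul : (k - i)*(k-1) + i*(k-1) = k*(k-1) := by
      rw [← Nat.add_mul, Nat.sub_add_cancel hik]
    have hkk : k*(k-1) + k = k^2 := by
      calc k*(k-1) + k = k*((k-1)+1) := by ring
        _ = k*k := by rw [Nat.sub_add_cancel (by omega)]
        _ = k^2 := by ring
    omega
  -- the witness specification
  have hfspec : ∀ (r : ℕ) (p : Fin (k+1)) (v : {v // v ∈ X}),
      (v.1.1.val % (k+2) = (if p.val < r then p.val else p.val + 1)) →
      wfun m n k X L r p = wval m n k X L r v := by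
    intro r p v hv
    rw [wfun, Finset.sum_eq_single_of_mem v (Finset.mem_attach _ _), if_pos hv]
    intro w _ hw
    rw [if_neg]
    intro hweq
    exact hw (Subtype.ext (hInj w.1 w.2 v.1 v.2 (hweq.trans hv.symm)))
  -- each element of A gives a witness
  have hgS : ∀ a : Fin (k^2), a ∈ A → ∀ v : {v // v ∈ X},
      (Gg m n k).typ (a, wfun m n k X L (a.val % (k+2))) v.1 = some (L v) := by
    intro a ha v
    have hrq : a.val % (k+2) < k+2 := Nat.mod_lt _ (by omega)
    have hjq : v.1.1.val % (k+2) < k+2 := Nat.mod_lt _ (by omega)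
    have hjr : v.1.1.val % (k+2) ≠ a.val % (k+2) := by
      intro h
      rw [hA] at ha
      simp only [Finset.mem_filter, Finset.mem_univ, true_and] at ha
      exact ha (Finset.mem_image.2 ⟨v.1, v.2, h⟩)
    rcases lt_or_gt_of_ne hjr with hlt | hgt
    · -- j < r : second branch of typ
      show (if h : a.val % (k+2) < v.1.1.val % (k+2) then _ else _) = _
      rw [dif_neg (by omega), dif_pos hlt]
      dsimp only
      have h1 : wfun m n k X L (a.val % (k+2)) ⟨v.1.1.val % (k+2), by omega⟩
          = wval m n k X L (a.val % (k+2)) v := by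
        apply hfspec
        dsimp only
        rw [if_pos hlt]
      rw [h1, wval, if_neg (by omega)]
      have h3 : (⟨min (a.val % (k+2) - 1) k, by omega⟩ : Fin (k+1))
          = ⟨a.val % (k+2) - 1, by omega⟩ := Fin.ext (by simp; omega)
      rw [h3]
      congr 1
      have h4 : ∀ B C : Fin (m+2*n), B + (C - B) = C := fun B C => add_sub_cancel B C
      rw [h4, factor_invFactor, AdjType.flip_flip]
    · -- r < j : first branch of typ
      show (if h : a.val % (k+2) < v.1.1.val % (k+2) then _ else _) = _
      rw [dif_pos hgt]
      dsimp only
      have h1 : wfun m n k X L (a.val % (k+2)) ⟨v.1.1.val % (k+2) - 1, by omega⟩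
          = wval m n k X L (a.val % (k+2)) v := by
        apply hfspec
        dsimp only
        rw [if_neg (by omega)]
        omega
      rw [h1, wval, if_pos hgt]
      have h3 : (⟨min (a.val % (k+2)) k, by omega⟩ : Fin (k+1))
          = ⟨a.val % (k+2), by omega⟩ := Fin.ext (by simp; omega)
      rw [h3]
      congr 1
      have h4 : ∀ B C : Fin (m+2*n), C - B + B = C := fun B C => sub_add_cancel C B
      rw [h4, factor_invFactor]
  -- conclude by cardinality
  have hsub : (fun a : Fin (k^2) => ((a, wfun m n k X L (a.val % (k+2))) :
        Fin (k^2) × (Fin (k+1) → Fin (m+2*n)))) '' ↑A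
      ⊆ {x | ∀ v : {v // v ∈ X}, (Gg m n k).typ x v = some (L v)} := by
    rintro x ⟨a, ha, rfl⟩
    exact hgS a (by simpa using ha)
  have hinj : Set.InjOn (fun a : Fin (k^2) => ((a, wfun m n k X L (a.val % (k+2))) :
        Fin (k^2) × (Fin (k+1) → Fin (m+2*n)))) ↑A := by
    intro a _ b _ hab
    exact congrArg Prod.fst hab
  calc (k - i)*(k-1) + 1 ≤ A.card := hAcard
    _ = (↑A : Set (Fin (k^2))).ncard := (Set.ncard_coe_finset _).symm
    _ = ((fun a : Fin (k^2) => ((a, wfun m n k X L (a.val % (k+2))) :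
          Fin (k^2) × (Fin (k+1) → Fin (m+2*n)))) '' ↑A).ncard :=
        (Set.ncard_image_of_injOn hinj).symm
    _ ≤ _ := Set.ncard_le_ncard hsub (Set.toFinite _)
/-- For all k ≥ 4 and m + 2n ≥ 3, there is an `(m,n)`-coloured mixed graph on
exactly `t = k²·(m+2n)^(k+1)` vertices with Property `P_{i,(k-i)(k-1)+1}` for i = 1, …, k. -/
theorem stmt3 (m n k : ℕ) (hk : 4 ≤ k) (hc : 3 ≤ m + 2*n) :
    ∃ H : MixedGraph (Fin (k^2 * (m + 2*n)^(k+1))) m n,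
      ∀ i : ℕ, 1 ≤ i → i ≤ k → H.HasPropP i ((k - i)*(k - 1) + 1) := by
  classical
  have hcard : Fintype.card (Fin (k^2) × (Fin (k+1) → Fin (m+2*n)))
      = k^2 * (m + 2*n)^(k+1) := by
    simp [Fintype.card_fun]
  let e : Fin (k^2 * (m + 2*n)^(k+1)) ≃ (Fin (k^2) × (Fin (k+1) → Fin (m+2*n))) :=
    (Fintype.equivFinOfCardEq hcard).symm
  set G := Gg m n k with hG
  refine ⟨⟨fun x y => G.typ (e x) (e y), fun v => G.typ_irrefl (e v),
    fun u v => G.typ_flip (e u) (e v)⟩, ?_⟩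
  intro i _hi1 hik
  intro X hX hcl L
  set X' : Finset (Fin (k^2) × (Fin (k+1) → Fin (m+2*n))) := X.image e with hX'def
  have hX' : X'.card ≤ i := le_trans Finset.card_image_le hX
  have hmem : ∀ v : {v // v ∈ X'}, e.symm v.1 ∈ X := by
    intro v
    obtain ⟨u, hu, h⟩ := Finset.mem_image.1 v.2
    rw [← h, Equiv.symm_apply_apply]
    exact hu
  have hcl' : ∀ u ∈ X', ∀ v ∈ X', u ≠ v → G.Adj u v := by
    intro u hu v hv huv
    obtain ⟨u0, hu0, rfl⟩ := Finset.mem_image.1 hu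
    obtain ⟨v0, hv0, rfl⟩ := Finset.mem_image.1 hv
    exact hcl u0 hu0 v0 hv0 (fun h => huv (by rw [h]))
  set L' : {v // v ∈ X'} → AdjType m n := fun v => L ⟨e.symm v.1, hmem v⟩ with hL'
  have hmain := Gg_hasPropP m n k i hk hc hik X' hX' hcl' L'
  refine le_trans hmain (le_of_eq ?_)
  have himg : {x | ∀ v : {v // v ∈ X'}, G.typ x v = some (L' v)}
      = e '' {x | ∀ v : {v // v ∈ X}, G.typ (e x) (e v.1) = some (L v)} := by
    ext x
    simp only [Set.mem_image, Set.mem_setOf_eq]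
    constructor
    · intro h
      refine ⟨e.symm x, ?_, Equiv.apply_symm_apply e x⟩
      intro v
      have hvX' : e v.1 ∈ X' := Finset.mem_image_of_mem e v.2
      have h2 := h ⟨e v.1, hvX'⟩
      have hv' : (⟨e.symm (e v.1), hmem ⟨e v.1, hvX'⟩⟩ : {v // v ∈ X}) = v :=
        Subtype.ext (e.symm_apply_apply v.1)
      have h3 : L' ⟨e v.1, hvX'⟩ = L v := congrArg L hv'

      rw [Equiv.apply_symm_apply]
      rw [h3] at h2
      exact h2
    · rintro ⟨w, hw, rfl⟩ v
      have h2 := hw ⟨e.symm v.1, hmem v⟩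
      rwa [Equiv.apply_symm_apply] at h2
  rw [himg, Set.ncard_image_of_injective _ e.injective]
end

section
/- For all integers k ≥ 4, c ≥ 3, and 1 ≤ i ≤ k, setting t = k²·c^{k+1}, the binomial tail sum satisfies Σ_{j=0}^{(k-i)(k-1)} C(t-i, j)·(c^{-i})^j·(1 - c^{-i})^{(t-i)-j} < e^{-t·c^{-i}} · t^{(k-i)(k-1)+1}, where the sum and both sides are real numbers. -/
/-- For all integers k ≥ 4, c ≥ 3 and 1 ≤ i ≤ k, with `t = k²·c^(k+1)`,
`Σ_{j=0}^{(k-i)(k-1)} C(t-i, j)·(c^{-i})^j·(1 - c^{-i})^{(t-i)-j}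
  < e^{-t·c^{-i}} · t^{(k-i)(k-1)+1}`. -/
theorem stmt13 (k c i t : ℕ) (hk : 4 ≤ k) (hc : 3 ≤ c) (hi1 : 1 ≤ i) (hik : i ≤ k)
    (ht : t = k^2 * c^(k+1)) :
    ∑ j ∈ Finset.range ((k - i)*(k - 1) + 1),
        ((t - i).choose j : ℝ) * (((c : ℝ)^i)⁻¹)^j * (1 - ((c : ℝ)^i)⁻¹)^(t - i - j)
      < Real.exp (-(t : ℝ) * ((c : ℝ)^i)⁻¹) * (t : ℝ)^((k - i)*(k - 1) + 1) := by
  set m := (k - i) * (k - 1) with hm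
  set p : ℝ := ((c : ℝ)^i)⁻¹ with hp
  -- basic facts
  have hc3 : (3:ℝ) ≤ (c:ℝ) := by exact_mod_cast hc
  have hcpow : (3:ℝ) ≤ (c:ℝ)^i := by
    calc (3:ℝ) ≤ (c:ℝ) := hc3
    _ = (c:ℝ)^1 := (pow_one _).symm
    _ ≤ (c:ℝ)^i := pow_le_pow_right₀ (by linarith) hi1
  have hcpow_pos : (0:ℝ) < (c:ℝ)^i := by linarith
  have hp_pos : 0 < p := inv_pos.mpr hcpow_pos
  have hp_le : p ≤ 1/3 := by
    rw [hp]
    rw [inv_le_comm₀ (by positivity) (by norm_num)]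
    simpa using hcpow
  have hi_le_pow : (i:ℝ) ≤ (c:ℝ)^i := by
    have : i < c^i := Nat.lt_pow_self (by omega)
    have h2 : (i:ℝ) < ((c:ℕ):ℝ)^i := by exact_mod_cast this
    linarith
  have hpi : p * i ≤ 1 := by
    rw [hp]
    rw [inv_mul_le_iff₀ hcpow_pos]
    simpa using hi_le_pow
  have hpep : p * Real.exp p ≤ 1 := by
    have h1 : Real.exp p ≤ Real.exp 1 := Real.exp_le_exp.mpr (by linarith)
    have h2 : Real.exp 1 < 2.7182818286 := Real.exp_one_lt_d9
    have h3 : 0 < Real.exp p := Real.exp_pos p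
    nlinarith
  -- size facts
  have hmk : m ≤ k * k := Nat.mul_le_mul (Nat.sub_le k i) (Nat.sub_le k 1)
  have hckpow : 243 ≤ c^(k+1) := by
    calc (243:ℕ) = 3^5 := by norm_num
    _ ≤ 3^(k+1) := Nat.pow_le_pow_right (by norm_num) (by omega)
    _ ≤ c^(k+1) := Nat.pow_le_pow_left hc _
  have htlarge : 243 * k^2 ≤ t := by
    rw [ht]; calc 243 * k^2 = k^2 * 243 := by ring
    _ ≤ k^2 * c^(k+1) := Nat.mul_le_mul_left _ hckpow
  have him_t : i + m ≤ t := by nlinarith [hmk, hik, hk, htlarge]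
  have ht1 : (1:ℝ) ≤ (t:ℝ) := by
    have : 1 ≤ t := by nlinarith [htlarge, hk]
    exact_mod_cast this
  -- per-term bound
  have key : ∀ j ∈ Finset.range (m+1),
      ((t - i).choose j : ℝ) * p^j * (1-p)^(t - i - j)
        ≤ 3 * (Real.exp (-(t:ℝ) * p) * (t:ℝ)^m) := by
    intro j hj
    rw [Finset.mem_range] at hj
    have hjm : j ≤ m := by omega
    have hij : i + j ≤ t := by omega
    have hcast : ((t - i - j : ℕ) : ℝ) = (t:ℝ) - i - j := by
      have : t - i - j = t - (i + j) := by omega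
      rw [this]
      push_cast [Nat.cast_sub hij]
      ring
    have h1 : ((t - i).choose j : ℝ) ≤ (t:ℝ)^j := by
      calc ((t - i).choose j : ℝ) ≤ ((t - i : ℕ):ℝ)^j := by
            exact_mod_cast Nat.choose_le_pow (t - i) j
      _ ≤ (t:ℝ)^j := by
            apply pow_le_pow_left₀ (by positivity)
            exact_mod_cast Nat.sub_le t i
    have h2 : (1 - p)^(t - i - j) ≤ Real.exp (-p * ((t:ℝ) - i - j)) := by
      calc (1 - p)^(t - i - j) ≤ (Real.exp (-p))^(t - i - j) := by
            apply pow_le_pow_left₀ (by linarith)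
            have := Real.add_one_le_exp (-p)
            linarith
      _ = Real.exp (-p * ((t - i - j : ℕ):ℝ)) := by
            rw [← Real.exp_nat_mul]; ring_nf
      _ = Real.exp (-p * ((t:ℝ) - i - j)) := by rw [hcast]
    have hterm : ((t - i).choose j : ℝ) * p^j * (1-p)^(t - i - j)
        ≤ (t:ℝ)^j * p^j * Real.exp (-p * ((t:ℝ) - i - j)) := by
      have h1p : (0:ℝ) ≤ 1 - p := by linarith
      apply mul_le_mul (mul_le_mul h1 le_rfl (by positivity) (by positivity)) h2
      · exact pow_nonneg h1p _
      · positivity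
    have hsplit : Real.exp (-p * ((t:ℝ) - i - j))
        = Real.exp (-(t:ℝ) * p) * Real.exp (p * i) * Real.exp (p * j) := by
      rw [← Real.exp_add, ← Real.exp_add]; ring_nf
    have hexpj : p^j * Real.exp (p * j) = (p * Real.exp p)^j := by
      rw [mul_pow, ← Real.exp_nat_mul]; ring_nf
    have hPj : (p * Real.exp p)^j ≤ 1 :=
      pow_le_one₀ (by positivity) hpep
    have hexpi : Real.exp (p * i) ≤ 3 := by
      calc Real.exp (p * i) ≤ Real.exp 1 := Real.exp_le_exp.mpr hpi
      _ ≤ 3 := by linarith [Real.exp_one_lt_d9]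
    have htj : (t:ℝ)^j ≤ (t:ℝ)^m := pow_le_pow_right₀ ht1 hjm
    calc ((t - i).choose j : ℝ) * p^j * (1-p)^(t - i - j)
        ≤ (t:ℝ)^j * p^j * Real.exp (-p * ((t:ℝ) - i - j)) := hterm
      _ = (t:ℝ)^j * ((p * Real.exp p)^j) * (Real.exp (p * i)) * Real.exp (-(t:ℝ) * p) := by
          rw [hsplit, ← hexpj]; ring
      _ ≤ (t:ℝ)^m * 1 * 3 * Real.exp (-(t:ℝ) * p) := by
          gcongr
      _ = 3 * (Real.exp (-(t:ℝ) * p) * (t:ℝ)^m) := by ring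
  have hsum := Finset.sum_le_card_nsmul (Finset.range (m+1))
      (fun j => ((t - i).choose j : ℝ) * p^j * (1-p)^(t - i - j))
      (3 * (Real.exp (-(t:ℝ) * p) * (t:ℝ)^m)) key
  rw [Finset.card_range] at hsum
  have hfin : ((m+1) : ℕ) • (3 * (Real.exp (-(t:ℝ) * p) * (t:ℝ)^m))
      < Real.exp (-(t:ℝ) * p) * (t:ℝ)^(m+1) := by
    rw [nsmul_eq_mul]
    have hE : (0:ℝ) < Real.exp (-(t:ℝ)*p) := Real.exp_pos _
    have hT : (0:ℝ) < (t:ℝ)^m := by positivity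
    have h3m : (3:ℝ) * (m+1) < t := by
      have hk16 : 16 ≤ k^2 := by
        calc (16:ℕ) = 4^2 := by norm_num
        _ ≤ k^2 := Nat.pow_le_pow_left hk 2
      have hmk2 : m ≤ k^2 := by rw [pow_two]; exact hmk
      have hnat : 3 * (m + 1) < t := by linarith
      exact_mod_cast hnat
    have : (t:ℝ)^(m+1) = (t:ℝ) * (t:ℝ)^m := by ring
    rw [this]
    push_cast
    nlinarith [mul_lt_mul_of_pos_right h3m (mul_pos hE hT)]
  calc _ ≤ _ := hsum
    _ < _ := hfin
end
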